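/- arXiv:1710.02793 — 4 statements merged into one kernel-verified Lean document; each statement's English description precedes it below -/
import Mathlib

section
/- Uniqueness from two moments: if ρ₁ is an aperiodic distribution on ℤ_L, x₁ has non-vanishing DFT, and (x₂, ρ₂) is another signal–distribution pair with the same first and second moments (x₁ ∗ ρ₁ = x₂ ∗ ρ₂ and C_{x₁} D_{ρ₁} C_{x₁}^T = C_{x₂} D_{ρ₂} C_{x₂}^T), then there exists s ∈ ℤ_L with x₂ = R_s x₁ and ρ₂ = R_{−s} ρ₁. -/
/-- The discrete Fourier transform of a real signal. -/
noncomputable def dftR {L : ℕ} [NeZero L] (x : ZMod L → ℝ) (k : ZMod L) : ℂ :=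
  ∑ i : ZMod L, (x i : ℂ) *
    Complex.exp (-(2 * (Real.pi : ℂ) * Complex.I * (k.val : ℂ) * (i.val : ℂ)) / (L : ℂ))

/-- A distribution on `ℤ_L` is aperiodic if no nonzero shift leaves it invariant. -/
def Aperiodic {L : ℕ} (ρ : ZMod L → ℝ) : Prop :=
  ¬ ∃ ℓ : ZMod L, ℓ ≠ 0 ∧ ∀ k, ρ (k + ℓ) = ρ k

open Complex Finset

namespace Stmt5Aux

variable {L : ℕ} [NeZero L]

lemma natCast_val_eq (a : ZMod L) : ((a.val : ℕ) : ZMod L) = a := ZMod.natCast_rightInverse a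

noncomputable def ee (L : ℕ) [NeZero L] (t : ZMod L) : ℂ :=
  Complex.exp (2 * (Real.pi : ℂ) * Complex.I * (t.val : ℂ) / (L : ℂ))

lemma ee_natCast (n : ℕ) : ee L (n : ZMod L) = Complex.exp (2 * (Real.pi : ℂ) * Complex.I * (n : ℂ) / (L : ℂ)) := by
  rw [ee, ZMod.val_natCast]
  conv_rhs => rw [← Nat.mod_add_div n L]
  push_cast
  rw [mul_add, add_div, Complex.exp_add]
  have hL : (L : ℂ) ≠ 0 := by exact_mod_cast (NeZero.ne L)
  have h2 : 2 * (Real.pi : ℂ) * Complex.I * ((L : ℂ) * (↑(n / L) : ℂ)) / (L : ℂ)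
      = (↑(n / L) : ℂ) * (2 * ↑Real.pi * Complex.I) := by field_simp
  rw [h2, Complex.exp_nat_mul_two_pi_mul_I, mul_one]

lemma ee_zero : ee L (0 : ZMod L) = 1 := by
  have := ee_natCast (L := L) 0
  simpa using this

lemma ee_add (a b : ZMod L) : ee L (a + b) = ee L a * ee L b := by
  have ha : ((a.val : ℕ) : ZMod L) = a := ZMod.natCast_rightInverse a
  have hb : ((b.val : ℕ) : ZMod L) = b := ZMod.natCast_rightInverse b
  have h : a + b = ((a.val + b.val : ℕ) : ZMod L) := by push_cast [ha, hb]; ring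
  rw [h, ee_natCast, ee, ee, ← Complex.exp_add]
  congr 1
  push_cast
  ring

lemma ee_ne_zero (t : ZMod L) : ee L t ≠ 0 := Complex.exp_ne_zero _

lemma ee_neg_mul (t : ZMod L) : ee L (-t) * ee L t = 1 := by
  rw [← ee_add, neg_add_cancel, ee_zero]

lemma conj_ee (t : ZMod L) : (starRingEnd ℂ) (ee L t) = ee L (-t) := by
  have h : (starRingEnd ℂ) (ee L t) * ee L t = 1 := by
    rw [ee, ← Complex.exp_conj, ← Complex.exp_add]
    rw [show (starRingEnd ℂ) (2 * (Real.pi : ℂ) * Complex.I * (t.val : ℂ) / (L : ℂ))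
        = -(2 * (Real.pi : ℂ) * Complex.I * (t.val : ℂ) / (L : ℂ)) by
      simp only [map_div₀, map_mul, Complex.conj_I, map_ofNat, Complex.conj_ofReal,
        map_natCast]
      ring]
    simp
  exact mul_right_cancel₀ (ee_ne_zero t) (h.trans (ee_neg_mul t).symm)

lemma ee_nsmul (n : ℕ) (t : ZMod L) : ee L (n • t) = ee L t ^ n := by
  induction n with
  | zero => simpa using ee_zero
  | succ n ih => rw [succ_nsmul, ee_add, ih, pow_succ]

lemma ee_eq_one_iff {t : ZMod L} : ee L t = 1 ↔ t = 0 := by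
  constructor
  · intro h
    rw [ee, Complex.exp_eq_one_iff] at h
    obtain ⟨n, hn⟩ := h
    have hL : (L : ℂ) ≠ 0 := by exact_mod_cast (NeZero.ne L)
    have h2 : (2 : ℂ) * (Real.pi : ℂ) * Complex.I ≠ 0 := by
      simp [Real.pi_ne_zero, Complex.I_ne_zero, Complex.ofReal_ne_zero]
    have hn' := congrArg (· * (L : ℂ)) hn
    simp only [div_mul_cancel₀ _ hL] at hn'
    have h3 : (t.val : ℂ) = (n : ℂ) * (L : ℂ) := by
      refine mul_left_cancel₀ h2 ?_
      linear_combination hn'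
    have hval : (t.val : ℤ) = n * L := by exact_mod_cast h3
    have hlt : (t.val : ℤ) < L := by exact_mod_cast t.val_lt
    have hge : (0 : ℤ) ≤ (t.val : ℤ) := by positivity
    have hLpos : (0 : ℤ) < L := by exact_mod_cast Nat.pos_of_ne_zero (NeZero.ne L)
    have hn0 : n = 0 := by nlinarith
    rw [hn0] at hval
    simp only [zero_mul] at hval
    have : t.val = 0 := by exact_mod_cast hval
    exact (ZMod.val_eq_zero t).mp this
  · rintro rfl; exact ee_zero

end Stmt5Aux

namespace Stmt5Aux

variable {L : ℕ} [NeZero L]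

lemma ee_neg_eq_inv (t : ZMod L) : ee L (-t) = (ee L t)⁻¹ :=
  eq_inv_of_mul_eq_one_left (ee_neg_mul t)

lemma sum_val_eq (f : ℕ → ℂ) : ∑ k : ZMod L, f k.val = ∑ n ∈ Finset.range L, f n := by
  apply Finset.sum_nbij' (i := fun (k : ZMod L) => k.val) (j := fun n => (n : ZMod L))
  · intro a _; exact Finset.mem_range.mpr a.val_lt
  · intro a _; exact Finset.mem_univ _
  · intro a _; exact ZMod.natCast_rightInverse a
  · intro a ha; exact ZMod.val_natCast_of_lt (Finset.mem_range.mp ha)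
  · intro a _; rfl

lemma sum_ee (m : ZMod L) : ∑ k : ZMod L, ee L (k * m) = if m = 0 then (L : ℂ) else 0 := by
  split_ifs with h
  · subst h
    simp [ee_zero]
  · have hkm : ∀ k : ZMod L, ee L (k * m) = ee L m ^ k.val := by
      intro k
      rw [← ee_nsmul]
      congr 1
      rw [nsmul_eq_mul, ZMod.natCast_rightInverse]
    simp_rw [hkm]
    rw [sum_val_eq (fun n => ee L m ^ n)]
    rw [geom_sum_eq (fun hc => h (ee_eq_one_iff.mp hc))]
    have : ee L m ^ L = 1 := by
      rw [← ee_nsmul]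
      have : L • m = 0 := by
        rw [nsmul_eq_mul]
        simp
      rw [this, ee_zero]
    rw [this]
    simp

noncomputable def dftC (L : ℕ) [NeZero L] (x : ZMod L → ℂ) (k : ZMod L) : ℂ :=
  ∑ i : ZMod L, x i * ee L (-(k * i))

lemma dftR_eq (x : ZMod L → ℝ) (k : ZMod L) : dftR x k = dftC L (fun i => (x i : ℂ)) k := by
  unfold dftR dftC
  refine Finset.sum_congr rfl fun i _ => ?_
  congr 1
  have h1 : (k * i : ZMod L) = ((k.val * i.val : ℕ) : ZMod L) := by
    rw [Nat.cast_mul, natCast_val_eq, natCast_val_eq]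
  rw [ee_neg_eq_inv, h1, ee_natCast, ← Complex.exp_neg]
  congr 1
  push_cast
  ring

lemma sum_shift (g : ZMod L → ℂ) (s c : ZMod L) :
    ∑ i : ZMod L, g (i - s) * ee L (c * i) = ee L (c * s) * ∑ a : ZMod L, g a * ee L (c * a) := by
  rw [← Equiv.sum_comp (Equiv.addRight s) (fun i => g (i - s) * ee L (c * i))]
  rw [Finset.mul_sum]
  refine Finset.sum_congr rfl fun a _ => ?_
  simp only [Equiv.coe_addRight, add_sub_cancel_right]
  rw [show c * (a + s) = c * a + c * s by ring, ee_add]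
  ring

lemma dftC_inv (f : ZMod L → ℂ) (j : ZMod L) :
    ∑ k : ZMod L, dftC L f k * ee L (k * j) = (L : ℂ) * f j := by
  unfold dftC
  simp_rw [Finset.sum_mul]
  rw [Finset.sum_comm]
  have step : ∀ i : ZMod L, ∑ k : ZMod L, f i * ee L (-(k * i)) * ee L (k * j)
      = f i * ∑ k : ZMod L, ee L (k * (j - i)) := by
    intro i
    rw [Finset.mul_sum]
    refine Finset.sum_congr rfl fun k _ => ?_
    rw [mul_assoc, ← ee_add]
    congr 2
    ring
  simp_rw [step, sum_ee, sub_eq_zero]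
  simp only [mul_ite, mul_zero]
  rw [Finset.sum_ite_eq]
  simp [mul_comm]

lemma dftC_injective {f g : ZMod L → ℂ} (h : ∀ k, dftC L f k = dftC L g k) : f = g := by
  funext j
  have hL : (L : ℂ) ≠ 0 := by exact_mod_cast (NeZero.ne L)
  have h1 := dftC_inv f j
  rw [Finset.sum_congr rfl (fun k _ => by rw [h k] :
    ∀ k ∈ Finset.univ, dftC L f k * ee L (k * j) = dftC L g k * ee L (k * j)), dftC_inv g j] at h1
  exact mul_left_cancel₀ hL h1.symm

end Stmt5Aux

namespace Stmt5Aux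

variable {L : ℕ} [NeZero L]

lemma conj_dftC (x : ZMod L → ℝ) (l : ZMod L) :
    (starRingEnd ℂ) (dftC L (fun i => (x i : ℂ)) l) = ∑ i : ZMod L, (x i : ℂ) * ee L (l * i) := by
  unfold dftC
  rw [map_sum]
  refine Finset.sum_congr rfl fun i _ => ?_
  rw [map_mul, Complex.conj_ofReal, conj_ee, neg_neg]

lemma dftC_ne_zero_conj {x : ZMod L → ℝ} {l : ZMod L} (h : dftC L (fun i => (x i : ℂ)) l ≠ 0) :
    (∑ i : ZMod L, (x i : ℂ) * ee L (l * i)) ≠ 0 := by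
  rw [← conj_dftC]
  simpa using h

lemma dftC_conv (ρ x : ZMod L → ℝ) (k : ZMod L) :
    dftC L (fun i => ((∑ s : ZMod L, ρ s * x (i - s) : ℝ) : ℂ)) k
      = dftC L (fun s => (ρ s : ℂ)) k * dftC L (fun i => (x i : ℂ)) k := by
  unfold dftC
  simp only [Complex.ofReal_sum, Complex.ofReal_mul, Finset.sum_mul]
  rw [Finset.sum_comm]
  have step : ∀ s : ZMod L, ∑ i : ZMod L, (ρ s : ℂ) * (x (i - s) : ℂ) * ee L (-(k * i))
      = (ρ s : ℂ) * ee L (-(k * s)) * ∑ a : ZMod L, (x a : ℂ) * ee L (-(k * a)) := by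
    intro s
    have h := sum_shift (fun a => (x a : ℂ)) s (-k)
    simp only [neg_mul] at h
    calc ∑ i : ZMod L, (ρ s : ℂ) * (x (i - s) : ℂ) * ee L (-(k * i))
        = (ρ s : ℂ) * ∑ i : ZMod L, (x (i - s) : ℂ) * ee L (-(k * i)) := by
          rw [Finset.mul_sum]; exact Finset.sum_congr rfl fun i _ => by ring
      _ = (ρ s : ℂ) * (ee L (-(k * s)) * ∑ a : ZMod L, (x a : ℂ) * ee L (-(k * a))) := by rw [h]
      _ = _ := by ring
  simp_rw [step]


end Stmt5Aux

namespace Stmt5Aux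

variable {L : ℕ} [NeZero L]

lemma dft2 (ρ x : ZMod L → ℝ) (k l : ZMod L) :
    ∑ i : ZMod L, ∑ j : ZMod L,
      ((∑ s : ZMod L, ρ s * (x (i - s) * x (j - s)) : ℝ) : ℂ) * ee L (-(k * i)) * ee L (l * j)
    = dftC L (fun s => (ρ s : ℂ)) (k - l) * dftC L (fun i => (x i : ℂ)) k
        * ∑ b : ZMod L, (x b : ℂ) * ee L (l * b) := by
  -- rewrite LHS into ∑ s ∑ i ∑ j form
  have expand : ∀ i j : ZMod L,
      ((∑ s : ZMod L, ρ s * (x (i - s) * x (j - s)) : ℝ) : ℂ) * ee L (-(k * i)) * ee L (l * j)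
      = ∑ s : ZMod L, (ρ s : ℂ) * (((x (i - s) : ℂ) * ee L (-(k * i))) * ((x (j - s) : ℂ) * ee L (l * j))) := by
    intro i j
    rw [Complex.ofReal_sum, Finset.sum_mul, Finset.sum_mul]
    refine Finset.sum_congr rfl fun s _ => ?_
    push_cast
    ring
  simp_rw [expand]
  have inner : ∀ s : ZMod L, ∑ j : ZMod L, ∑ i : ZMod L,
        (ρ s : ℂ) * (((x (i - s) : ℂ) * ee L (-(k * i))) * ((x (j - s) : ℂ) * ee L (l * j)))
      = (ρ s : ℂ) * ((ee L (-(k * s)) * dftC L (fun a => (x a : ℂ)) k)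
          * (ee L (l * s) * ∑ b : ZMod L, (x b : ℂ) * ee L (l * b))) := by
    intro s
    rw [Finset.sum_comm]
    have h1 : ∑ i : ZMod L, (x (i - s) : ℂ) * ee L (-(k * i))
        = ee L (-(k * s)) * dftC L (fun a => (x a : ℂ)) k := by
      have h := sum_shift (fun a => (x a : ℂ)) s (-k)
      simp only [neg_mul] at h
      exact h
    have h2 : ∑ j : ZMod L, (x (j - s) : ℂ) * ee L (l * j)
        = ee L (l * s) * ∑ b : ZMod L, (x b : ℂ) * ee L (l * b) :=
      sum_shift (fun a => (x a : ℂ)) s l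
    calc ∑ i : ZMod L, ∑ j : ZMod L,
          (ρ s : ℂ) * (((x (i - s) : ℂ) * ee L (-(k * i))) * ((x (j - s) : ℂ) * ee L (l * j)))
        = (ρ s : ℂ) * ((∑ i : ZMod L, (x (i - s) : ℂ) * ee L (-(k * i)))
            * (∑ j : ZMod L, (x (j - s) : ℂ) * ee L (l * j))) := by
          rw [Finset.sum_mul_sum, Finset.mul_sum]
          refine Finset.sum_congr rfl fun i _ => ?_
          rw [Finset.mul_sum]
      _ = _ := by rw [h1, h2]
  have swap : ∑ i : ZMod L, ∑ j : ZMod L, ∑ s : ZMod L,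
        (ρ s : ℂ) * (((x (i - s) : ℂ) * ee L (-(k * i))) * ((x (j - s) : ℂ) * ee L (l * j)))
      = ∑ s : ZMod L, ∑ j : ZMod L, ∑ i : ZMod L,
        (ρ s : ℂ) * (((x (i - s) : ℂ) * ee L (-(k * i))) * ((x (j - s) : ℂ) * ee L (l * j))) := by
    rw [Finset.sum_comm]
    refine (Finset.sum_congr rfl fun j _ => Finset.sum_comm).trans ?_
    exact Finset.sum_comm
  rw [swap]
  simp_rw [inner]
  have last : ∀ s : ZMod L, (ρ s : ℂ) * ((ee L (-(k * s)) * dftC L (fun a => (x a : ℂ)) k)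
        * (ee L (l * s) * ∑ b : ZMod L, (x b : ℂ) * ee L (l * b)))
      = ((ρ s : ℂ) * ee L (-((k - l) * s)))
        * (dftC L (fun a => (x a : ℂ)) k * ∑ b : ZMod L, (x b : ℂ) * ee L (l * b)) := by
    intro s
    have hee : ee L (-(k * s)) * ee L (l * s) = ee L (-((k - l) * s)) := by
      rw [← ee_add]; congr 1; ring
    calc (ρ s : ℂ) * ((ee L (-(k * s)) * dftC L (fun a => (x a : ℂ)) k)
          * (ee L (l * s) * ∑ b : ZMod L, (x b : ℂ) * ee L (l * b)))
        = ((ρ s : ℂ) * (ee L (-(k * s)) * ee L (l * s)))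
          * (dftC L (fun a => (x a : ℂ)) k * ∑ b : ZMod L, (x b : ℂ) * ee L (l * b)) := by ring
      _ = _ := by rw [hee]
  simp_rw [last]
  rw [← Finset.sum_mul]
  rw [show dftC L (fun s => (ρ s : ℂ)) (k - l) = ∑ s : ZMod L, (ρ s : ℂ) * ee L (-((k - l) * s)) from rfl]
  ring

end Stmt5Aux


open Stmt5Aux

/-- Uniqueness from the first two moments: if `ρ₁` is aperiodic, `x₁` has
non-vanishing DFT, and `(x₂, ρ₂)` has the same first and second moments, then
`x₂ = R_s x₁` and `ρ₂ = R_{-s} ρ₁` for some shift `s`. -/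
theorem stmt_5 (L : ℕ) [NeZero L] (x₁ x₂ ρ₁ ρ₂ : ZMod L → ℝ)
    (hρ₁0 : ∀ s, 0 ≤ ρ₁ s) (hρ₁1 : ∑ s, ρ₁ s = 1)
    (hρ₂0 : ∀ s, 0 ≤ ρ₂ s) (hρ₂1 : ∑ s, ρ₂ s = 1)
    (haper : Aperiodic ρ₁)
    (hdft : ∀ k, dftR x₁ k ≠ 0)
    (hm1 : ∀ i, ∑ s, ρ₁ s * x₁ (i - s) = ∑ s, ρ₂ s * x₂ (i - s))
    (hm2 : ∀ i j, ∑ s, ρ₁ s * (x₁ (i - s) * x₁ (j - s))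
                = ∑ s, ρ₂ s * (x₂ (i - s) * x₂ (j - s))) :
    ∃ s : ZMod L, (∀ i, x₂ i = x₁ (i - s)) ∧ (∀ i, ρ₂ i = ρ₁ (i + s)) := by
  classical
  set X₁ : ZMod L → ℂ := dftC L (fun i => (x₁ i : ℂ)) with hX₁def
  set X₂ : ZMod L → ℂ := dftC L (fun i => (x₂ i : ℂ)) with hX₂def
  set P₁ : ZMod L → ℂ := dftC L (fun s => (ρ₁ s : ℂ)) with hP₁def
  set P₂ : ZMod L → ℂ := dftC L (fun s => (ρ₂ s : ℂ)) with hP₂def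
  have hX₁ne : ∀ k, X₁ k ≠ 0 := fun k => by rw [hX₁def, ← dftR_eq]; exact hdft k
  have hconj₁ : ∀ l, (starRingEnd ℂ) (X₁ l) = ∑ b : ZMod L, (x₁ b : ℂ) * ee L (l * b) :=
    fun l => conj_dftC x₁ l
  have hconj₂ : ∀ l, (starRingEnd ℂ) (X₂ l) = ∑ b : ZMod L, (x₂ b : ℂ) * ee L (l * b) :=
    fun l => conj_dftC x₂ l
  -- first moment in Fourier domain
  have hstar1 : ∀ k, P₁ k * X₁ k = P₂ k * X₂ k := by
    intro k
    rw [hP₁def, hX₁def, hP₂def, hX₂def, ← dftC_conv, ← dftC_conv]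
    congr 1
    funext i
    exact_mod_cast congrArg (fun r : ℝ => (r : ℂ)) (hm1 i)
  -- second moment in Fourier domain
  have hstar2 : ∀ k l, P₁ (k - l) * X₁ k * (starRingEnd ℂ) (X₁ l)
      = P₂ (k - l) * X₂ k * (starRingEnd ℂ) (X₂ l) := by
    intro k l
    rw [hconj₁, hconj₂, hP₁def, hX₁def, hP₂def, hX₂def, ← dft2, ← dft2]
    refine Finset.sum_congr rfl fun i _ => Finset.sum_congr rfl fun j _ => ?_
    rw [hm2 i j]
  -- P at zero equals 1
  have hP₁0 : P₁ 0 = 1 := by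
    rw [hP₁def]
    unfold dftC
    simp only [zero_mul, neg_zero, ee_zero, mul_one]
    rw [← Complex.ofReal_sum]
    exact_mod_cast congrArg (fun r : ℝ => (r : ℂ)) hρ₁1
  have hP₂0 : P₂ 0 = 1 := by
    rw [hP₂def]
    unfold dftC
    simp only [zero_mul, neg_zero, ee_zero, mul_one]
    rw [← Complex.ofReal_sum]
    exact_mod_cast congrArg (fun r : ℝ => (r : ℂ)) hρ₂1
  -- equal moduli
  have habs : ∀ k, X₁ k * (starRingEnd ℂ) (X₁ k) = X₂ k * (starRingEnd ℂ) (X₂ k) := by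
    intro k
    have := hstar2 k k
    rw [sub_self, hP₁0, hP₂0, one_mul, one_mul] at this
    exact this
  have hX₂ne : ∀ k, X₂ k ≠ 0 := by
    intro k hk
    have := habs k
    rw [hk, zero_mul] at this
    exact mul_ne_zero (hX₁ne k) (fun hc => hX₁ne k (by simpa using congrArg (starRingEnd ℂ) hc)) this
  -- phase function
  set u : ZMod L → ℂ := fun k => X₂ k / X₁ k with hudef
  have hconjne : ∀ k, (starRingEnd ℂ) (X₁ k) ≠ 0 :=
    fun k hc => hX₁ne k (by simpa using congrArg (starRingEnd ℂ) hc)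
  have hX₂eq : ∀ k, X₂ k = u k * X₁ k := fun k =>
    (div_mul_cancel₀ _ (hX₁ne k)).symm
  have hu_ne : ∀ k, u k ≠ 0 := fun k => by
    rw [hudef]; exact div_ne_zero (hX₂ne k) (hX₁ne k)
  have hu_unit : ∀ k, u k * (starRingEnd ℂ) (u k) = 1 := by
    intro k
    show X₂ k / X₁ k * (starRingEnd ℂ) (X₂ k / X₁ k) = 1
    rw [map_div₀, div_mul_div_comm, ← habs k,
      div_self (mul_ne_zero (hX₁ne k) (hconjne k))]
  have hu0 : u 0 = 1 := by
    have h := hstar1 0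
    rw [hP₁0, hP₂0, one_mul, one_mul] at h
    show X₂ 0 / X₁ 0 = 1
    rw [← h, div_self (hX₁ne 0)]
  -- key relation
  have hkey : ∀ (m k : ZMod L), P₁ m = P₂ m * (u k * (starRingEnd ℂ) (u (k - m))) := by
    intro m k
    have h := hstar2 k (k - m)
    rw [sub_sub_cancel] at h
    rw [hX₂eq k, hX₂eq (k - m), map_mul] at h
    have hGne : (starRingEnd ℂ) (X₁ (k - m)) ≠ 0 :=
      fun hc => hX₁ne (k - m) (by simpa using congrArg (starRingEnd ℂ) hc)
    apply mul_right_cancel₀ (mul_ne_zero (hX₁ne k) hGne)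
    linear_combination h
  have hP₂ne : ∀ m, P₁ m ≠ 0 → P₂ m ≠ 0 := by
    intro m hm hc
    rw [hkey m 0, hc, zero_mul] at hm
    exact hm rfl
  -- the subgroup of "good" shifts
  set T : AddSubgroup (ZMod L) :=
    { carrier := {m | ∃ c : ℂ, ∀ k, u k * (starRingEnd ℂ) (u (k - m)) = c}
      zero_mem' := ⟨1, fun k => by rw [sub_zero]; exact hu_unit k⟩
      add_mem' := by
        rintro a b ⟨c, hc⟩ ⟨d, hd⟩
        refine ⟨c * d, fun k => ?_⟩
        calc u k * (starRingEnd ℂ) (u (k - (a + b)))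
            = u k * (starRingEnd ℂ) (u (k - (a + b))) * (u (k - a) * (starRingEnd ℂ) (u (k - a))) := by
              rw [hu_unit (k - a), mul_one]
          _ = (u k * (starRingEnd ℂ) (u (k - a))) * (u (k - a) * (starRingEnd ℂ) (u (k - a - b))) := by
              rw [sub_sub]; ring
          _ = c * d := by rw [hc k, hd (k - a)]
      neg_mem' := by
        rintro a ⟨c, hc⟩
        refine ⟨(starRingEnd ℂ) c, fun k => ?_⟩
        have h := hc (k + a)
        rw [add_sub_cancel_right] at h
        have := congrArg (starRingEnd ℂ) h
        rw [map_mul, Complex.conj_conj] at this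
        rw [sub_neg_eq_add]
        rw [← this]
        ring } with hTdef
  have hTmem : ∀ m, P₁ m ≠ 0 → m ∈ T := by
    intro m hm
    refine ⟨P₁ m / P₂ m, fun k => ?_⟩
    rw [eq_div_iff (hP₂ne m hm)]
    rw [hkey m k]
    ring
  -- aperiodicity forces the closure of the support to be everything
  have hclosure : AddSubgroup.closure {m : ZMod L | P₁ m ≠ 0} = ⊤ := by
    by_contra hH
    set H := AddSubgroup.closure {m : ZMod L | P₁ m ≠ 0} with hHdef
    set d := Nat.card H with hddef
    have hd1 : 1 ≤ d := Nat.one_le_iff_ne_zero.mpr (Nat.card_pos (α := H)).ne'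
    have hdle : d ≤ L := by
      rw [hddef]
      have := Nat.card_le_card_of_injective _ H.subtype_injective
      rwa [Nat.card_zmod] at this
    have hdne : d ≠ L := by
      intro hc
      have h' : Nat.card H = Nat.card (ZMod L) := by
        rw [Nat.card_zmod, ← hddef]; exact hc
      exact hH (AddSubgroup.eq_top_of_card_eq H (by simpa using h'))
    have hdlt : d < L := lt_of_le_of_ne hdle hdne
    have hℓne : ((d : ZMod L)) ≠ 0 := by
      rw [Ne, ZMod.natCast_eq_zero_iff]
      intro hdvd
      exact absurd (Nat.le_of_dvd (by omega) hdvd) (by omega)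
    have hperiod : ∀ k, ρ₁ (k + (d : ZMod L)) = ρ₁ k := by
      have hsmul : ∀ m ∈ H, d • m = 0 := by
        intro m hm
        have : d • (⟨m, hm⟩ : H) = 0 := card_nsmul_eq_zero'
        exact_mod_cast congrArg (AddSubgroup.subtype H) this
      have hfour : ∀ m : ZMod L, ee L (m * (d : ZMod L)) * P₁ m = P₁ m := by
        intro m
        by_cases hm : P₁ m = 0
        · rw [hm, mul_zero]
        · have hmH : m ∈ H := AddSubgroup.subset_closure hm
          have : m * (d : ZMod L) = 0 := by
            rw [mul_comm, ← nsmul_eq_mul]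
            exact hsmul m hmH
          rw [this, ee_zero, one_mul]
      have hshift : ∀ m : ZMod L, dftC L (fun i => (ρ₁ (i + (d : ZMod L)) : ℂ)) m
          = ee L (m * (d : ZMod L)) * P₁ m := by
        intro m
        have h := sum_shift (fun a => (ρ₁ a : ℂ)) (-(d : ZMod L)) (-m)
        simp only [sub_neg_eq_add, neg_mul] at h
        rw [show -(m * -((d : ℕ) : ZMod L)) = m * ((d : ℕ) : ZMod L) by ring] at h
        exact h
      have heq : (fun i => (ρ₁ (i + (d : ZMod L)) : ℂ)) = (fun i => (ρ₁ i : ℂ)) := by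
        apply dftC_injective
        intro m
        rw [hshift m, hfour m]
      intro k
      exact_mod_cast congrFun heq k
    exact haper ⟨(d : ZMod L), hℓne, hperiod⟩
  have hTall : ∀ m : ZMod L, m ∈ T := by
    intro m
    have : AddSubgroup.closure {m : ZMod L | P₁ m ≠ 0} ≤ T :=
      (AddSubgroup.closure_le T).mpr (fun m hm => hTmem m hm)
    rw [hclosure] at this
    exact this trivial
  -- extract the multiplier ζ
  obtain ⟨ζ, hζ⟩ := hTall 1
  have hustep : ∀ k, u k = ζ * u (k - 1) := by
    intro k
    have h := hζ k
    have h2 := hu_unit (k - 1)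
    calc u k = u k * ((starRingEnd ℂ) (u (k - 1)) * u (k - 1)) := by
          rw [mul_comm ((starRingEnd ℂ) (u (k - 1))), h2, mul_one]
      _ = (u k * (starRingEnd ℂ) (u (k - 1))) * u (k - 1) := by ring
      _ = ζ * u (k - 1) := by rw [h]
  have hind : ∀ n : ℕ, u ((n : ZMod L)) = ζ ^ n := by
    intro n
    induction n with
    | zero => simpa using hu0
    | succ n ih =>
      have h := hustep ((n + 1 : ℕ) : ZMod L)
      rw [show (((n + 1 : ℕ) : ZMod L) - 1) = ((n : ℕ) : ZMod L) by push_cast; ring] at h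
      rw [h, ih, pow_succ]
      ring
  have huval : ∀ k : ZMod L, u k = ζ ^ k.val := by
    intro k
    conv_lhs => rw [← natCast_val_eq k]
    exact hind k.val
  have hζL : ζ ^ L = 1 := by
    have := hind L
    rw [ZMod.natCast_self] at this
    rw [← this, hu0]
  obtain ⟨i, hiL, hi⟩ := (Complex.isPrimitiveRoot_exp L (NeZero.ne L)).eq_pow_of_pow_eq_one hζL
  set t : ZMod L := ((i : ℕ) : ZMod L) with htdef
  have hζt : ζ = ee L t := by
    rw [htdef, ee_natCast, ← hi, ← Complex.exp_nat_mul]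
    congr 1
    ring
  have hut : ∀ k, u k = ee L (k * t) := by
    intro k
    rw [huval k, hζt, ← ee_nsmul]
    congr 1
    rw [nsmul_eq_mul, natCast_val_eq]
  refine ⟨-t, ?_, ?_⟩
  · -- x₂ = shift of x₁
    have heq : (fun i => (x₂ i : ℂ)) = (fun i => (x₁ (i - (-t)) : ℂ)) := by
      apply dftC_injective
      intro k
      have hsh : dftC L (fun i => (x₁ (i - (-t)) : ℂ)) k = ee L (k * t) * X₁ k := by
        have h := sum_shift (fun a => (x₁ a : ℂ)) (-t) (-k)
        simp only [neg_mul] at h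
        rw [show -(k * -t) = k * t by ring] at h
        exact h
      rw [hsh, ← hX₂def, hX₂eq k, hut k]
    intro j
    exact_mod_cast congrFun heq j
  · -- ρ₂ = shift of ρ₁
    have hP₂eq : ∀ m, P₂ m = ee L (m * (-t)) * P₁ m := by
      intro m
      have h := hkey m m
      rw [sub_self, hu0, map_one, mul_one, hut m] at h
      have hne := ee_ne_zero (L := L) (m * t)
      rw [h]
      rw [show m * (-t) = -(m * t) by ring, ee_neg_eq_inv]
      field_simp
    have heq : (fun i => (ρ₂ i : ℂ)) = (fun i => (ρ₁ (i + (-t)) : ℂ)) := by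
      apply dftC_injective
      intro m
      have hsh : dftC L (fun i => (ρ₁ (i + (-t)) : ℂ)) m
          = ee L (m * (-t)) * P₁ m := by
        have h := sum_shift (fun a => (ρ₁ a : ℂ)) t (-m)
        simp only [neg_mul] at h
        rw [show m * (-t) = -(m * t) by ring]
        simp only [← sub_eq_add_neg]
        exact h
      rw [hsh, ← hP₂def, hP₂eq m]
    intro j
    exact_mod_cast congrFun heq j
end

section
/- Non-uniqueness for periodic distributions: let ℓ < L/2 divide L, L > 1, ρ have period ℓ, and x₁ have non-vanishing DFT. Define x₂ by (Fx₂)[k] = (Fx₁)[k] if k is a multiple of L/ℓ and (Fx₂)[k] = −(Fx₁)[k] otherwise. Then x₂ is real, x₂ is not a cyclic shift of x₁, and x₂ has the same first and second moments under ρ as x₁: x₁ ∗ ρ = x₂ ∗ ρ and C_{x₁} D_ρ C_{x₁}^T = C_{x₂} D_ρ C_{x₂}^T. -/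
open Finset Complex

namespace Stmt8Aux

noncomputable def zt (L : ℕ) : ℂ := Complex.exp (-(2 * (Real.pi : ℂ) * Complex.I) / L)

variable {L : ℕ} [NeZero L]

lemma zt_prim : IsPrimitiveRoot (zt L) L := by
  have h := Complex.isPrimitiveRoot_exp L (NeZero.ne L)
  have : zt L = (Complex.exp (2 * Real.pi * Complex.I / L))⁻¹ := by
    rw [zt, ← Complex.exp_neg]
    ring_nf
  rw [this]
  exact h.inv

lemma zt_pow_L : zt L ^ L = 1 := zt_prim.pow_eq_one

lemma zt_pow_eq_one_iff (m : ℕ) : zt L ^ m = 1 ↔ L ∣ m :=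
  zt_prim.pow_eq_one_iff_dvd m

lemma zt_pow_congr {a b : ℕ} (h : a ≡ b [MOD L]) : zt L ^ a = zt L ^ b := by
  have key : ∀ c : ℕ, zt L ^ c = zt L ^ (c % L) := by
    intro c
    conv_lhs => rw [← Nat.div_add_mod c L]
    rw [pow_add, pow_mul, zt_pow_L, one_pow, one_mul]
  rw [key a, key b, h]

lemma dftR_eq (x : ZMod L → ℝ) (k : ZMod L) :
    dftR x k = ∑ i : ZMod L, (x i : ℂ) * zt L ^ (k.val * i.val) := by
  unfold dftR
  refine Finset.sum_congr rfl fun i _ => ?_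
  congr 1
  rw [zt, ← Complex.exp_nat_mul]
  congr 1
  push_cast
  ring

lemma sum_val (f : ℕ → ℂ) :
    ∑ k : ZMod L, f (ZMod.val k) = ∑ m ∈ Finset.range L, f m :=
  Finset.sum_nbij' (fun k => ZMod.val k) (fun m => (m : ZMod L))
    (fun k _ => Finset.mem_range.mpr (ZMod.val_lt k))
    (fun _ _ => Finset.mem_univ _)
    (fun k _ => ZMod.natCast_zmod_val k)
    (fun m hm => ZMod.val_natCast_of_lt (Finset.mem_range.mp hm))
    (fun _ _ => rfl)

lemma geom_roots {n : ℕ} (w : ℂ) (hw : w ^ n = 1) :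
    ∑ m ∈ Finset.range n, w ^ m = if w = 1 then (n : ℂ) else 0 := by
  split_ifs with h
  · simp [h]
  · have h2 := geom_sum_mul w n
    rw [hw, sub_self] at h2
    exact (mul_eq_zero.mp h2).resolve_right (sub_ne_zero.mpr h)

/-- Orthogonality over the full group. -/
lemma orth (c : ℕ) :
    ∑ k : ZMod L, zt L ^ (ZMod.val k * c) = if L ∣ c then (L : ℂ) else 0 := by
  have h1 : ∀ k : ZMod L, zt L ^ (ZMod.val k * c) = (zt L ^ c) ^ (ZMod.val k) := by
    intro k; rw [← pow_mul, mul_comm]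
  simp_rw [h1]
  rw [sum_val (f := fun m => (zt L ^ c) ^ m), geom_roots _ (by rw [← pow_mul, mul_comm, pow_mul, zt_pow_L, one_pow])]
  simp only [zt_pow_eq_one_iff]

/-- DFT of a shift. -/
lemma dftR_shift (x : ZMod L → ℝ) (s k : ZMod L) :
    dftR (fun i => x (i - s)) k = zt L ^ (k.val * s.val) * dftR x k := by
  rw [dftR_eq, dftR_eq, Finset.mul_sum]
  refine (Fintype.sum_equiv (Equiv.addRight s) _ _ (fun j => ?_)).symm
  simp only [Equiv.coe_addRight, add_sub_cancel_right]
  rw [mul_comm (zt L ^ (k.val * s.val)) _, mul_assoc, ← pow_add]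
  congr 1
  apply zt_pow_congr
  rw [ZMod.val_add, ← Nat.mul_add]
  exact ((Nat.mod_modEq _ L).mul_left _).symm

/-- Fourier inversion-type formula. -/
lemma dftR_inv (x : ZMod L → ℝ) (j : ZMod L) :
    ∑ k : ZMod L, dftR x k * zt L ^ (ZMod.val k * ((L - 1) * j.val)) = (L : ℂ) * (x j) := by
  simp_rw [dftR_eq, Finset.sum_mul]
  rw [Finset.sum_comm]
  have key : ∀ i : ZMod L,
      ∑ k : ZMod L, (x i : ℂ) * zt L ^ (k.val * i.val) * zt L ^ (ZMod.val k * ((L - 1) * j.val))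
        = (x i : ℂ) * (if L ∣ (i.val + (L - 1) * j.val) then (L : ℂ) else 0) := by
    intro i
    simp_rw [mul_assoc, ← pow_add, ← Nat.mul_add, ← Finset.mul_sum]
    rw [orth]
  simp_rw [key]
  have hiff : ∀ i : ZMod L, L ∣ (i.val + (L - 1) * j.val) ↔ i = j := by
    intro i
    rw [← ZMod.natCast_eq_zero_iff]
    push_cast
    rw [ZMod.natCast_zmod_val, ZMod.natCast_zmod_val]
    have hL1 : ((L - 1 : ℕ) : ZMod L) = -1 := by
      rw [Nat.cast_sub (Nat.one_le_iff_ne_zero.mpr (NeZero.ne L)), ZMod.natCast_self,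
        Nat.cast_one, zero_sub]
    rw [hL1]
    constructor
    · intro h
      have : i - j = 0 := by linear_combination h
      exact sub_eq_zero.mp this
    · intro h; subst h; ring
  simp_rw [hiff, mul_ite, mul_zero]
  rw [Finset.sum_ite_eq' Finset.univ j (fun i => ((x i : ℂ) * L))]
  simp [mul_comm]


lemma dftR_inj (x y : ZMod L → ℝ) (h : ∀ k, dftR x k = dftR y k) : ∀ j, x j = y j := by
  intro j
  have h1 := dftR_inv x j
  have h2 := dftR_inv y j
  simp_rw [h] at h1
  rw [h1] at h2
  have hL : (L : ℂ) ≠ 0 := Nat.cast_ne_zero.mpr (NeZero.ne L)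
  exact_mod_cast mul_left_cancel₀ hL h2

end Stmt8Aux

open Stmt8Aux

/-- Non-uniqueness for periodic distributions: if `ℓ < L/2` divides `L`, `ρ` has
period `ℓ`, `x₁` has non-vanishing DFT, and the real signal `x₂` satisfies
`(Fx₂)[k] = (Fx₁)[k]` when `L/ℓ ∣ k` and `(Fx₂)[k] = -(Fx₁)[k]` otherwise, then
`x₂` is not a cyclic shift of `x₁` and has the same first and second moments
under `ρ` as `x₁`. -/
theorem stmt_8 (L ℓ : ℕ) [NeZero L] (hL : 1 < L) (hℓ0 : 0 < ℓ)
    (hdiv : ℓ ∣ L) (hhalf : 2 * ℓ < L)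
    (x₁ x₂ ρ : ZMod L → ℝ)
    (hρ0 : ∀ s, 0 ≤ ρ s) (hρ1 : ∑ s, ρ s = 1)
    (hper : ∀ k : ZMod L, ρ (k + (ℓ : ZMod L)) = ρ k)
    (hx₁ : ∀ k, dftR x₁ k ≠ 0)
    (hx₂ : ∀ k : ZMod L,
      dftR x₂ k = if (L / ℓ) ∣ k.val then dftR x₁ k else -dftR x₁ k) :
    (¬ ∃ s : ZMod L, ∀ i, x₂ i = x₁ (i - s))
    ∧ (∀ i, ∑ s, ρ s * x₁ (i - s) = ∑ s, ρ s * x₂ (i - s))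
    ∧ (∀ i j, ∑ s, ρ s * (x₁ (i - s) * x₁ (j - s))
            = ∑ s, ρ s * (x₂ (i - s) * x₂ (j - s))) := by
  set d := L / ℓ with hd
  have hLd : ℓ * d = L := Nat.mul_div_cancel' hdiv
  have hd2 : 2 < d := by
    by_contra h
    push_neg at h
    have h3 : ℓ * d ≤ ℓ * 2 := Nat.mul_le_mul_left ℓ h
    rw [hLd, Nat.mul_comm] at h3
    omega
  have hd0 : d ≠ 0 := by omega
  have hdR : (d : ℝ) ≠ 0 := Nat.cast_ne_zero.mpr hd0
  have hdC : (d : ℂ) ≠ 0 := Nat.cast_ne_zero.mpr hd0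
  -- the averaged signal
  set S : ZMod L → ℝ := fun a => ∑ m ∈ Finset.range d, x₁ (a - ((m * ℓ : ℕ) : ZMod L)) with hSdef
  -- S is invariant under shifts by multiples of ℓ
  have Sstep : ∀ a : ZMod L, S (a - (ℓ : ZMod L)) = S a := by
    intro a
    rw [hSdef]
    simp only
    have e1 : ∀ m : ℕ, a - (ℓ : ZMod L) - ((m * ℓ : ℕ) : ZMod L)
        = a - (((m + 1) * ℓ : ℕ) : ZMod L) := by
      intro m; push_cast; ring
    simp_rw [e1]
    have h1 := Finset.sum_range_succ' (fun m => x₁ (a - ((m * ℓ : ℕ) : ZMod L))) d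
    have h2 := Finset.sum_range_succ (fun m => x₁ (a - ((m * ℓ : ℕ) : ZMod L))) d
    have h3 : x₁ (a - ((d * ℓ : ℕ) : ZMod L)) = x₁ (a - ((0 * ℓ : ℕ) : ZMod L)) := by
      have : ((d * ℓ : ℕ) : ZMod L) = 0 := by
        rw [show d * ℓ = L from by rw [mul_comm]; exact hLd]
        exact ZMod.natCast_self L
      rw [this]
      norm_num
    rw [h3] at h2
    linarith [h1, h2]
  have SP : ∀ (m : ℕ) (a : ZMod L), S (a - ((m * ℓ : ℕ) : ZMod L)) = S a := by
    intro m
    induction m with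
    | zero => intro a; norm_num
    | succ n ih =>
      intro a
      have e : a - (((n + 1) * ℓ : ℕ) : ZMod L) = (a - ((n * ℓ : ℕ) : ZMod L)) - (ℓ : ZMod L) := by
        push_cast; ring
      rw [e, Sstep, ih]
  -- x₂ in terms of x₁ and S
  have hSdft : ∀ k : ZMod L, (∑ a : ZMod L, (S a : ℂ) * zt L ^ (k.val * a.val))
      = (if d ∣ k.val then (d : ℂ) else 0) * dftR x₁ k := by
    intro k
    have hsh : ∀ m : ℕ,
        (∑ a : ZMod L, ((x₁ (a - ((m * ℓ : ℕ) : ZMod L)) : ℝ) : ℂ) * zt L ^ (k.val * a.val))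
          = zt L ^ (k.val * (m * ℓ)) * dftR x₁ k := by
      intro m
      rw [← dftR_eq (fun i => x₁ (i - ((m * ℓ : ℕ) : ZMod L))) k, dftR_shift]
      congr 1
      apply zt_pow_congr
      rw [ZMod.val_natCast]
      exact ((Nat.mod_modEq _ L).mul_left _)
    rw [hSdef]
    simp only
    simp_rw [Complex.ofReal_sum, Finset.sum_mul]
    rw [Finset.sum_comm]
    rw [Finset.sum_congr rfl (fun m _ => hsh m)]
    rw [← Finset.sum_mul]
    congr 1
    have hw : ∀ m : ℕ, zt L ^ (k.val * (m * ℓ)) = (zt L ^ (k.val * ℓ)) ^ m := by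
      intro m; rw [← pow_mul]; ring_nf
    simp_rw [hw]
    rw [geom_roots _ (by rw [← pow_mul, mul_assoc, hLd, mul_comm, pow_mul, zt_pow_L, one_pow])]
    congr 1
    rw [eq_iff_iff, zt_pow_eq_one_iff]
    constructor
    · intro h
      have : ℓ * d ∣ ℓ * k.val := by rw [hLd]; rwa [mul_comm k.val ℓ] at h
      exact (Nat.mul_dvd_mul_iff_left hℓ0).mp this
    · intro h
      obtain ⟨c, hc⟩ := h
      exact ⟨c, by rw [hc, ← hLd]; ring⟩
  have hydft : ∀ k : ZMod L,
      dftR (fun a => (2 / (d : ℝ)) * S a - x₁ a) k = dftR x₂ k := by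
    intro k
    rw [dftR_eq, hx₂ k]
    push_cast
    simp_rw [sub_mul, mul_assoc]
    rw [Finset.sum_sub_distrib, ← Finset.mul_sum, hSdft, ← dftR_eq]
    split_ifs with h
    · field_simp
      ring
    · field_simp
      ring
  have hx₂' : ∀ a, x₂ a = (2 / (d : ℝ)) * S a - x₁ a :=
    dftR_inj x₂ (fun a => (2 / (d : ℝ)) * S a - x₁ a) (fun k => (hydft k).symm)
  -- periodicity of ρ under multiples of ℓ
  have hρm : ∀ (m : ℕ) (s : ZMod L), ρ (s + ((m * ℓ : ℕ) : ZMod L)) = ρ s := by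
    intro m
    induction m with
    | zero => intro s; norm_num
    | succ n ih =>
      intro s
      have e : s + (((n + 1) * ℓ : ℕ) : ZMod L) = (s + (ℓ : ZMod L)) + ((n * ℓ : ℕ) : ZMod L) := by
        push_cast; ring
      rw [e, ih (s + (ℓ : ZMod L)), hper s]
  -- averaging lemma
  have ML : ∀ f : ZMod L → ℝ, ∑ s : ZMod L, ρ s * f s
      = (1 / (d : ℝ)) * ∑ s : ZMod L, ρ s
          * (∑ m ∈ Finset.range d, f (s + ((m * ℓ : ℕ) : ZMod L))) := by
    intro f
    have hre : ∀ m ∈ Finset.range d,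
        (∑ s : ZMod L, ρ s * f (s + ((m * ℓ : ℕ) : ZMod L))) = ∑ s : ZMod L, ρ s * f s := by
      intro m _
      refine Fintype.sum_equiv (Equiv.addRight ((m * ℓ : ℕ) : ZMod L)) _ _ (fun s => ?_)
      simp only [Equiv.coe_addRight]
      rw [hρm m s]
    have hmain : (∑ s : ZMod L, ρ s * (∑ m ∈ Finset.range d, f (s + ((m * ℓ : ℕ) : ZMod L))))
        = (d : ℝ) * ∑ s : ZMod L, ρ s * f s := by
      simp_rw [Finset.mul_sum]
      rw [Finset.sum_comm, Finset.sum_congr rfl hre, Finset.sum_const, Finset.card_range,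
        nsmul_eq_mul, Finset.mul_sum]
    rw [hmain, ← mul_assoc, one_div_mul_cancel hdR, one_mul]
  -- sums of x₂ over the subgroup agree with those of x₁
  have hx2sum : ∀ a : ZMod L,
      (∑ m ∈ Finset.range d, x₂ (a - ((m * ℓ : ℕ) : ZMod L))) = S a := by
    intro a
    have h1 : ∀ m ∈ Finset.range d, x₂ (a - ((m * ℓ : ℕ) : ZMod L))
        = (2 / (d : ℝ)) * S a - x₁ (a - ((m * ℓ : ℕ) : ZMod L)) := by
      intro m _
      rw [hx₂', SP]
    rw [Finset.sum_congr rfl h1, Finset.sum_sub_distrib, Finset.sum_const, Finset.card_range,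
      nsmul_eq_mul]
    rw [show (∑ m ∈ Finset.range d, x₁ (a - ((m * ℓ : ℕ) : ZMod L))) = S a from rfl]
    field_simp
    ring
  have hx2sum2 : ∀ a b : ZMod L,
      (∑ m ∈ Finset.range d, x₂ (a - ((m * ℓ : ℕ) : ZMod L)) * x₂ (b - ((m * ℓ : ℕ) : ZMod L)))
      = ∑ m ∈ Finset.range d, x₁ (a - ((m * ℓ : ℕ) : ZMod L)) * x₁ (b - ((m * ℓ : ℕ) : ZMod L)) := by
    intro a b
    have h1 : ∀ m ∈ Finset.range d,
        x₂ (a - ((m * ℓ : ℕ) : ZMod L)) * x₂ (b - ((m * ℓ : ℕ) : ZMod L))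
        = ((2 / (d : ℝ)) * S a) * ((2 / (d : ℝ)) * S b)
          - ((2 / (d : ℝ)) * S a) * x₁ (b - ((m * ℓ : ℕ) : ZMod L))
          - x₁ (a - ((m * ℓ : ℕ) : ZMod L)) * ((2 / (d : ℝ)) * S b)
          + x₁ (a - ((m * ℓ : ℕ) : ZMod L)) * x₁ (b - ((m * ℓ : ℕ) : ZMod L)) := by
      intro m _
      rw [hx₂', hx₂', SP, SP]
      ring
    rw [Finset.sum_congr rfl h1]
    simp only [Finset.sum_add_distrib, Finset.sum_sub_distrib, Finset.sum_const,
      Finset.card_range, nsmul_eq_mul, ← Finset.mul_sum, ← Finset.sum_mul]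
    rw [show (∑ m ∈ Finset.range d, x₁ (a - ((m * ℓ : ℕ) : ZMod L))) = S a from rfl,
      show (∑ m ∈ Finset.range d, x₁ (b - ((m * ℓ : ℕ) : ZMod L))) = S b from rfl]
    field_simp
    ring
  refine ⟨?_, ?_, ?_⟩
  · -- not a shift
    rintro ⟨s, hs⟩
    have hshift : ∀ k : ZMod L, dftR x₂ k = zt L ^ (k.val * s.val) * dftR x₁ k := by
      intro k
      rw [show x₂ = fun i => x₁ (i - s) from funext hs]
      exact dftR_shift x₁ s k
    have key : ∀ k : ZMod L, ¬ (d ∣ k.val) → zt L ^ (k.val * s.val) = -1 := by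
      intro k hk
      have h1 := hx₂ k
      rw [if_neg hk] at h1
      have h2 : zt L ^ (k.val * s.val) * dftR x₁ k = (-1) * dftR x₁ k := by
        rw [← hshift k, h1]; ring
      exact mul_right_cancel₀ (hx₁ k) h2
    have h2L : 2 < L := by omega
    have hv1 : (1 : ZMod L).val = 1 := by
      rw [show (1 : ZMod L) = ((1 : ℕ) : ZMod L) from by norm_cast]
      exact ZMod.val_natCast_of_lt hL
    have hv2 : (2 : ZMod L).val = 2 := by
      rw [show (2 : ZMod L) = ((2 : ℕ) : ZMod L) from by norm_cast]
      exact ZMod.val_natCast_of_lt h2L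
    have k1 := key 1 (by rw [hv1]; intro hdvd; have := Nat.le_of_dvd one_pos hdvd; omega)
    have k2 := key 2 (by rw [hv2]; intro hdvd; have := Nat.le_of_dvd two_pos hdvd; omega)
    rw [hv1, one_mul] at k1
    rw [hv2] at k2
    have hfin : ((-1 : ℂ)) ^ 2 = -1 := by
      conv_lhs => rw [← k1, ← pow_mul, mul_comm s.val 2, k2]
    norm_num at hfin
  · -- first moments
    intro i
    rw [ML (fun s => x₁ (i - s)), ML (fun s => x₂ (i - s))]
    congr 1
    refine Finset.sum_congr rfl (fun s _ => ?_)
    congr 1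
    have e : ∀ m : ℕ, i - (s + ((m * ℓ : ℕ) : ZMod L)) = (i - s) - ((m * ℓ : ℕ) : ZMod L) := by
      intro m; ring
    simp_rw [e]
    rw [hx2sum (i - s)]
  · -- second moments
    intro i j
    rw [ML (fun s => x₁ (i - s) * x₁ (j - s)), ML (fun s => x₂ (i - s) * x₂ (j - s))]
    congr 1
    refine Finset.sum_congr rfl (fun s _ => ?_)
    congr 1
    have e1 : ∀ m : ℕ, i - (s + ((m * ℓ : ℕ) : ZMod L)) = (i - s) - ((m * ℓ : ℕ) : ZMod L) := by
      intro m; ring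
    have e2 : ∀ m : ℕ, j - (s + ((m * ℓ : ℕ) : ZMod L)) = (j - s) - ((m * ℓ : ℕ) : ZMod L) := by
      intro m; ring
    simp_rw [e1, e2]
    exact (hx2sum2 (i - s) (j - s)).symm
end

section
/- If L is even, ρ is L/2-periodic, x has non-vanishing DFT with |（Fx)[k]| = 1 for all k, and each period of ρ has no repeated values, then x and R_{L/2}x are orthogonal eigenvectors of M² = C_x D_ρ C_x^T sharing an eigenvalue, and any eigenvector u of M² in their common eigenspace that is orthogonal to R_{L/2}u must be a scalar multiple of x or of R_{L/2}x. -/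
open Matrix

open Finset Complex

set_option linter.unusedSectionVars false
set_option linter.unusedVariables false
set_option maxHeartbeats 1000000

section helpers
variable {L : ℕ} [NeZero L]

noncomputable def zetaC (L : ℕ) : ℂ := Complex.exp (-(2 * (Real.pi:ℂ) * Complex.I) / L)

lemma zetaC_pow (a : ℕ) : zetaC L ^ a = Complex.exp ((a:ℂ) * (-(2 * (Real.pi:ℂ) * Complex.I) / L)) := by
  rw [zetaC, ← Complex.exp_nat_mul]

lemma zetaC_pow_L : zetaC L ^ L = 1 := by
  rw [zetaC_pow]
  have hL : (L:ℂ) ≠ 0 := Nat.cast_ne_zero.mpr (NeZero.ne L)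
  rw [mul_div_assoc', mul_comm, mul_div_assoc, div_self hL, mul_one]
  rw [show -(2 * (Real.pi:ℂ) * Complex.I) = -(2 * Real.pi * Complex.I) by ring]
  rw [Complex.exp_neg]
  norm_num [Complex.exp_two_pi_mul_I]

lemma zetaC_pow_congr {a b : ℕ} (h : a % L = b % L) : zetaC L ^ a = zetaC L ^ b := by
  have key : ∀ c : ℕ, zetaC L ^ c = zetaC L ^ (c % L) := by
    intro c
    conv_lhs => rw [← Nat.div_add_mod c L]
    rw [pow_add, pow_mul, zetaC_pow_L, one_pow, one_mul]
  rw [key a, key b, h]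

lemma zetaC_pow_ne_one {v : ℕ} (h1 : 0 < v) (h2 : v < L) : zetaC L ^ v ≠ 1 := by
  intro h
  rw [zetaC_pow] at h
  obtain ⟨n, hn⟩ := Complex.exp_eq_one_iff.mp h
  have hL : (L:ℂ) ≠ 0 := Nat.cast_ne_zero.mpr (NeZero.ne L)
  have hpi : (Real.pi:ℂ) ≠ 0 := Complex.ofReal_ne_zero.mpr Real.pi_ne_zero
  have h2pi : (2:ℂ) * Real.pi * Complex.I ≠ 0 := by
    simp [hpi, Complex.I_ne_zero]
  field_simp at hn
  have h4 : (-(v:ℂ)) * (2*Real.pi*Complex.I) = ((n:ℂ)*L) * (2*Real.pi*Complex.I) := by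
    linear_combination (2*Real.pi*Complex.I) * hn
  have h5 := mul_right_cancel₀ h2pi h4
  have key2 : (-(v:ℤ) : ℂ) = ((n*L : ℤ) : ℂ) := by push_cast; exact_mod_cast h5
  have key3 : -(v:ℤ) = n*L := by exact_mod_cast key2
  have hz' : (v:ℤ) = (L:ℤ) * (-n) := by linarith
  have hdvd : L ∣ v := Int.natCast_dvd_natCast.mp ⟨-n, hz'⟩
  exact absurd (Nat.le_of_dvd h1 hdvd) (not_le.mpr h2)

noncomputable def chC {L : ℕ} [NeZero L] (m : ZMod L) : ℂ := zetaC L ^ m.val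

lemma chC_zero : chC (0 : ZMod L) = 1 := by simp [chC]

lemma chC_add (m n : ZMod L) : chC (m + n) = chC m * chC n := by
  rw [chC, chC, chC, ← pow_add]
  exact zetaC_pow_congr (by rw [ZMod.val_add]; exact Nat.mod_mod_of_dvd _ dvd_rfl)

lemma chC_mul_neg (m : ZMod L) : chC m * chC (-m) = 1 := by
  rw [← chC_add, add_neg_cancel, chC_zero]

lemma abs_chC (m : ZMod L) : ‖chC m‖ = 1 := by
  rw [chC, zetaC_pow]
  have : ((m.val:ℂ)) * (-(2 * (Real.pi:ℂ) * Complex.I) / L)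
      = Complex.I * ((-(2 * Real.pi * m.val / L) : ℝ) : ℂ) := by
    push_cast; field_simp
  rw [this, Complex.norm_exp]
  simp

lemma conj_chC (m : ZMod L) : (starRingEnd ℂ) (chC m) = chC (-m) := by
  have h2 : (starRingEnd ℂ) (chC m) = (chC m)⁻¹ := (Complex.inv_eq_conj (abs_chC m)).symm
  rw [h2]
  exact (eq_inv_of_mul_eq_one_left (by rw [mul_comm]; exact chC_mul_neg m)).symm

lemma chC_ne_one {c : ZMod L} (hc : c ≠ 0) : chC c ≠ 1 := by
  apply zetaC_pow_ne_one _ (ZMod.val_lt c)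
  exact Nat.pos_of_ne_zero (fun h0 => hc ((ZMod.val_eq_zero c).mp h0))

lemma sum_chC (c : ZMod L) : ∑ k : ZMod L, chC (k * c) = if c = 0 then (L:ℂ) else 0 := by
  by_cases hc : c = 0
  · simp [hc, chC_zero]
  · rw [if_neg hc]
    set S := ∑ k : ZMod L, chC (k * c) with hS
    have h1 : S = ∑ k : ZMod L, chC ((k + 1) * c) := by
      rw [hS]
      exact Fintype.sum_equiv (Equiv.addRight (1 : ZMod L)) _ _ (fun k => rfl) |>.symm
    have h2 : S = chC c * S := by
      calc S = ∑ k : ZMod L, chC (k*c + c) := by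
              rw [h1]; exact Finset.sum_congr rfl (fun k _ => by rw [add_mul, one_mul])
        _ = ∑ k : ZMod L, chC c * chC (k*c) :=
              Finset.sum_congr rfl (fun k _ => by rw [chC_add, mul_comm])
        _ = chC c * S := (Finset.mul_sum _ _ _).symm
    have h3 : (chC c - 1) * S = 0 := by linear_combination -h2
    rcases mul_eq_zero.mp h3 with h | h
    · exact absurd (sub_eq_zero.mp h) (chC_ne_one hc)
    · exact h

end helpers

section corr
variable {L : ℕ} [NeZero L]

lemma chC_mul_val (k i : ZMod L) : chC (k * i) = zetaC L ^ (k.val * i.val) := by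
  rw [chC, ZMod.val_mul]
  exact zetaC_pow_congr (Nat.mod_mod_of_dvd _ dvd_rfl)

lemma dftR_eq (x : ZMod L → ℝ) (k : ZMod L) : dftR x k = ∑ i, (x i:ℂ) * chC (k * i) := by
  unfold dftR
  refine Finset.sum_congr rfl (fun i _ => ?_)
  congr 1
  rw [chC_mul_val, zetaC_pow]
  congr 1
  push_cast
  ring

lemma autocorr (x : ZMod L → ℝ) (hx : ∀ k, ‖dftR x k‖ = 1) (ℓ : ZMod L) :
    ∑ i, x i * x (i - ℓ) = if ℓ = 0 then 1 else 0 := by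
  have hL : (L:ℂ) ≠ 0 := Nat.cast_ne_zero.mpr (NeZero.ne L)
  have hone : ∀ k, dftR x k * (starRingEnd ℂ) (dftR x k) = 1 := by
    intro k
    rw [Complex.mul_conj, ← Complex.sq_norm, hx k]
    norm_num
  have hconj : ∀ k, (starRingEnd ℂ) (dftR x k) = ∑ j, (x j:ℂ) * chC (-(k*j)) := by
    intro k
    rw [dftR_eq, _root_.map_sum]
    refine Finset.sum_congr rfl fun j _ => ?_
    rw [_root_.map_mul, Complex.conj_ofReal, conj_chC]
  have key : (L:ℂ) * ∑ i, ((x i * x (i - ℓ) : ℝ):ℂ) = (L:ℂ) * (if ℓ = 0 then 1 else 0) := by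
    have e1 : ∑ k : ZMod L, (dftR x k * (starRingEnd ℂ) (dftR x k)) * chC (k * (-ℓ))
        = (L:ℂ) * (if ℓ = 0 then 1 else 0) := by
      have h' : ∀ k : ZMod L, k ∈ Finset.univ →
          (dftR x k * (starRingEnd ℂ) (dftR x k)) * chC (k * (-ℓ)) = chC (k * (-ℓ)) :=
        fun k _ => by rw [hone k, one_mul]
      rw [Finset.sum_congr rfl h', sum_chC]
      simp only [neg_eq_zero]
      split <;> simp
    have e2 : ∑ k : ZMod L, (dftR x k * (starRingEnd ℂ) (dftR x k)) * chC (k * (-ℓ))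
        = (L:ℂ) * ∑ i, ((x i * x (i - ℓ) : ℝ):ℂ) := by
      calc ∑ k : ZMod L, (dftR x k * (starRingEnd ℂ) (dftR x k)) * chC (k * (-ℓ))
          = ∑ k : ZMod L, ∑ i, ∑ j, (x i:ℂ) * (x j:ℂ) * chC (k * (i - j - ℓ)) := by
            refine Finset.sum_congr rfl fun k _ => ?_
            rw [hconj, dftR_eq, Finset.sum_mul_sum, Finset.sum_mul]
            refine Finset.sum_congr rfl fun i _ => ?_
            rw [Finset.sum_mul]
            refine Finset.sum_congr rfl fun j _ => ?_
            have hch : chC (k*i) * chC (-(k*j)) * chC (k * (-ℓ)) = chC (k * (i - j - ℓ)) := by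
              rw [← chC_add, ← chC_add]; congr 1; ring
            calc (x i:ℂ) * chC (k*i) * ((x j:ℂ) * chC (-(k*j))) * chC (k * (-ℓ))
                = (x i:ℂ) * (x j:ℂ) * (chC (k*i) * chC (-(k*j)) * chC (k*(-ℓ))) := by ring
              _ = (x i:ℂ) * (x j:ℂ) * chC (k * (i - j - ℓ)) := by rw [hch]
        _ = ∑ i, ∑ j, (x i:ℂ) * (x j:ℂ) * ∑ k : ZMod L, chC (k * (i - j - ℓ)) := by
            rw [Finset.sum_comm]
            refine Finset.sum_congr rfl fun i _ => ?_
            rw [Finset.sum_comm]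
            refine Finset.sum_congr rfl fun j _ => ?_
            rw [Finset.mul_sum]
        _ = ∑ i, ∑ j, (x i:ℂ) * (x j:ℂ) * (if i - j - ℓ = 0 then (L:ℂ) else 0) := by
            simp only [sum_chC]
        _ = ∑ i, (x i:ℂ) * (x (i - ℓ):ℂ) * (L:ℂ) := by
            refine Finset.sum_congr rfl fun i _ => ?_
            rw [Finset.sum_eq_single (i - ℓ)]
            · rw [if_pos (by ring)]
            · intro j _ hj
              rw [if_neg, mul_zero]
              intro h0
              exact hj (by linear_combination -h0)
            · intro h; exact absurd (Finset.mem_univ _) h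
        _ = (L:ℂ) * ∑ i, ((x i * x (i - ℓ):ℝ):ℂ) := by
            rw [Finset.mul_sum]
            refine Finset.sum_congr rfl fun i _ => ?_
            push_cast; ring
    rw [← e1, e2]
  have key2 := mul_left_cancel₀ hL key
  have final : ((∑ i, x i * x (i-ℓ) :ℝ):ℂ) = ((if ℓ = 0 then (1:ℝ) else 0):ℂ) := by
    rw [Complex.ofReal_sum, key2]
    split <;> simp
  by_cases hz : ℓ = 0 <;>
    simp only [hz, if_true, if_false] at final ⊢ <;> exact_mod_cast final

end corr

section eiglem
variable {L : ℕ} [NeZero L]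

lemma corr_shift (x : ZMod L → ℝ) (hx : ∀ k, ‖dftR x k‖ = 1) (s t : ZMod L) :
    ∑ j, x (j - s) * x (j - t) = if s = t then 1 else 0 := by
  have h1 : ∑ j, x (j - s) * x (j - t) = ∑ m, x m * x (m - (t - s)) := by
    refine (Fintype.sum_equiv (Equiv.addRight s) _ _ fun m => ?_).symm
    show x m * x (m - (t - s)) = x ((m + s) - s) * x ((m + s) - t)
    congr 2 <;> ring
  rw [h1, autocorr x hx]
  by_cases hst : s = t
  · simp [hst]
  · rw [if_neg (fun h => hst (by linear_combination -h)), if_neg hst]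

lemma orth_shift (x : ZMod L → ℝ) (hx : ∀ k, ‖dftR x k‖ = 1) (i j : ZMod L) :
    ∑ t, x (i - t) * x (j - t) = if i = j then 1 else 0 := by
  have h1 : ∑ t, x (i - t) * x (j - t) = ∑ m, x m * x (m - (i - j)) := by
    refine (Fintype.sum_equiv (Equiv.subLeft i) _ _ fun m => ?_).symm
    show x m * x (m - (i - j)) = x (i - (i - m)) * x (j - (i - m))
    congr 2 <;> ring
  rw [h1, autocorr x hx]
  by_cases hij : i = j
  · simp [hij]
  · rw [if_neg (fun h => hij (by linear_combination h)), if_neg hij]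

lemma eig (x : ZMod L → ℝ) (hx : ∀ k, ‖dftR x k‖ = 1) (ρ : ZMod L → ℝ) (t : ZMod L) :
    (Matrix.of fun i j : ZMod L => ∑ s, ρ s * (x (i - s) * x (j - s))).mulVec
      (fun i => x (i - t)) = ρ t • (fun i => x (i - t)) := by
  funext i
  simp only [Matrix.mulVec, dotProduct, Matrix.of_apply, Pi.smul_apply, smul_eq_mul]
  calc ∑ j, (∑ s, ρ s * (x (i - s) * x (j - s))) * x (j - t)
      = ∑ j, ∑ s, ρ s * (x (i - s) * x (j - s)) * x (j - t) := by
        exact Finset.sum_congr rfl fun j _ => Finset.sum_mul _ _ _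
    _ = ∑ s, ∑ j, ρ s * (x (i - s) * x (j - s)) * x (j - t) := Finset.sum_comm
    _ = ∑ s, (ρ s * x (i - s)) * ∑ j, x (j - s) * x (j - t) := by
        refine Finset.sum_congr rfl fun s _ => ?_
        rw [Finset.mul_sum]
        exact Finset.sum_congr rfl fun j _ => by ring
    _ = ∑ s, (ρ s * x (i - s)) * (if s = t then 1 else 0) := by
        simp only [corr_shift x hx]
    _ = ρ t * x (i - t) := by
        rw [Finset.sum_eq_single t]
        · simp
        · intro s _ hs; rw [if_neg hs, mul_zero]
        · intro h; exact absurd (Finset.mem_univ _) h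

end eiglem

/-- If `L` is even, `ρ` is `L/2`-periodic, `x` has unit-modulus DFT, and each
period of `ρ` has no repeated values, then `x` and `R_{L/2} x` are orthogonal
eigenvectors of `M² = C_x D_ρ C_xᵀ` sharing the eigenvalue `ρ[0]`, and any
eigenvector `u` in their common eigenspace that is orthogonal to `R_{L/2} u`
is a scalar multiple of `x` or of `R_{L/2} x`. -/
theorem stmt_9 (L : ℕ) [NeZero L] (hL : 2 ∣ L) (x ρ : ZMod L → ℝ)
    (hρ0 : ∀ s, 0 ≤ ρ s) (hρ1 : ∑ s, ρ s = 1)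
    (hper : ∀ k : ZMod L, ρ (k + ((L / 2 : ℕ) : ZMod L)) = ρ k)
    (hx : ∀ k, ‖dftR x k‖ = 1)
    (hdist : ∀ k k' : ZMod L, k.val < L / 2 → k'.val < L / 2 → k ≠ k' → ρ k ≠ ρ k') :
    (∑ i, x i * x (i - ((L / 2 : ℕ) : ZMod L))) = 0
    ∧ (Matrix.of fun i j : ZMod L => ∑ s, ρ s * (x (i - s) * x (j - s))).mulVec x
        = ρ 0 • x
    ∧ (Matrix.of fun i j : ZMod L => ∑ s, ρ s * (x (i - s) * x (j - s))).mulVec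
          (fun i => x (i - ((L / 2 : ℕ) : ZMod L)))
        = ρ 0 • (fun i => x (i - ((L / 2 : ℕ) : ZMod L)))
    ∧ ∀ u : ZMod L → ℝ,
        (Matrix.of fun i j : ZMod L => ∑ s, ρ s * (x (i - s) * x (j - s))).mulVec u
            = ρ 0 • u →
        (∑ i, u i * u (i - ((L / 2 : ℕ) : ZMod L))) = 0 →
        ∃ α : ℝ, u = α • x ∨ u = α • (fun i => x (i - ((L / 2 : ℕ) : ZMod L))) := by
  obtain ⟨m, hm⟩ := hL
  have hm0 : m ≠ 0 := by rintro rfl; exact (NeZero.ne L) (by omega)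
  have hL2pos : 0 < L / 2 := by omega
  have hL2lt : L / 2 < L := by omega
  set e : ZMod L := ((L / 2 : ℕ) : ZMod L) with he
  have hval : e.val = L / 2 := by rw [he]; exact ZMod.val_natCast_of_lt hL2lt
  have hne : e ≠ 0 := fun h0 => by rw [h0, ZMod.val_zero] at hval; omega
  have hee : e + e = 0 := by
    rw [he, ← Nat.cast_add, show L / 2 + L / 2 = L by omega, ZMod.natCast_self]
  have hρe : ρ e = ρ 0 := by have := hper 0; rwa [zero_add] at this
  have hx0 : ∑ i, x i * x i = 1 := by simpa using autocorr x hx 0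
  -- Part 1
  have p1 : ∑ i, x i * x (i - e) = 0 := by rw [autocorr x hx e, if_neg hne]
  refine ⟨p1, ?_, ?_, ?_⟩
  · have h2 := eig x hx ρ 0
    simpa [sub_zero] using h2
  · rw [eig x hx ρ e, hρe]
  · intro u hu hu2
    set c : ZMod L → ℝ := fun t => ∑ i, u i * x (i - t) with hc
    have hcd : ∀ t, c t = ∑ i, u i * x (i - t) := fun t => rfl
    -- the matrix entry sums, symmetric
    set M : Matrix (ZMod L) (ZMod L) ℝ :=
      Matrix.of fun i j : ZMod L => ∑ s, ρ s * (x (i - s) * x (j - s)) with hM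
    have hMsymm : ∀ i j, M i j = M j i := by
      intro i j
      simp only [hM, Matrix.of_apply]
      exact Finset.sum_congr rfl fun s _ => by ring
    have hMv : ∀ t j, ∑ i, M j i * x (i - t) = ρ t * x (j - t) := by
      intro t j
      have h3 := congrFun (eig x hx ρ t) j
      simpa [Matrix.mulVec, dotProduct, hM] using h3
    -- Step A
    have stepA : ∀ t, ρ t * c t = ρ 0 * c t := by
      intro t
      have hDl : ∑ i, (M.mulVec u) i * x (i - t) = ρ 0 * c t := by
        rw [hu]
        simp only [Pi.smul_apply, smul_eq_mul]
        rw [hcd, Finset.mul_sum]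
        exact Finset.sum_congr rfl fun i _ => by ring
      have hDr : ∑ i, (M.mulVec u) i * x (i - t) = ρ t * c t := by
        calc ∑ i, (M.mulVec u) i * x (i - t)
            = ∑ i, (∑ j, M i j * u j) * x (i - t) := by
              simp only [Matrix.mulVec, dotProduct]
          _ = ∑ i, ∑ j, M i j * u j * x (i - t) :=
              Finset.sum_congr rfl fun i _ => Finset.sum_mul _ _ _
          _ = ∑ j, ∑ i, M i j * u j * x (i - t) := Finset.sum_comm
          _ = ∑ j, u j * ∑ i, M j i * x (i - t) := by
              refine Finset.sum_congr rfl fun j _ => ?_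
              rw [Finset.mul_sum]
              refine Finset.sum_congr rfl fun i _ => ?_
              rw [hMsymm i j]; ring
          _ = ∑ j, u j * (ρ t * x (j - t)) := by
              refine Finset.sum_congr rfl fun j _ => ?_
              rw [hMv t j]
          _ = ρ t * c t := by
              rw [hcd, Finset.mul_sum]
              exact Finset.sum_congr rfl fun j _ => by ring
      rw [← hDl, hDr]
    -- distinctness
    have rhoeq : ∀ t : ZMod L, ρ t = ρ 0 → t = 0 ∨ t = e := by
      intro t ht
      by_cases hcase : t.val < L / 2
      · left
        by_contra ht0
        exact hdist t 0 hcase (by rw [ZMod.val_zero]; exact hL2pos) ht0 ht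
      · right
        push_neg at hcase
        obtain ⟨v, hv⟩ : ∃ v : ℕ, t.val - L / 2 = v := ⟨_, rfl⟩
        have hvlt : v < L / 2 := by have := ZMod.val_lt t; omega
        have hvL : v < L := by omega
        have h4 : ((v + L / 2 : ℕ) : ZMod L) = t := by
          rw [show v + L / 2 = t.val by omega, ZMod.natCast_val, ZMod.cast_id]
        have htv : t = ((v : ℕ) : ZMod L) + e := by
          rw [he]
          conv_lhs => rw [← h4]
          push_cast
          ring
        have hρt : ρ t = ρ ((v : ℕ) : ZMod L) := by rw [htv]; exact hper _
        have hveq : ((v : ℕ) : ZMod L) = 0 := by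
          by_contra hv0
          exact hdist _ 0 (by rw [ZMod.val_natCast_of_lt hvL]; exact hvlt)
            (by rw [ZMod.val_zero]; exact hL2pos) hv0 (by rw [← hρt]; exact ht)
        rw [hveq, zero_add] at htv
        exact htv
    have hc0 : ∀ t, t ≠ 0 → t ≠ e → c t = 0 := by
      intro t ht0 hte
      have hρne : ρ t ≠ ρ 0 := fun hre => by rcases rhoeq t hre with h | h <;> [exact ht0 h; exact hte h]
      have h5 : (ρ t - ρ 0) * c t = 0 := by linear_combination stepA t
      rcases mul_eq_zero.mp h5 with h | h
      · exact absurd (by linarith : ρ t = ρ 0) hρne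
      · exact h
    -- completeness
    have hexp : ∀ i, u i = ∑ t, c t * x (i - t) := by
      intro i
      symm
      calc ∑ t, c t * x (i - t)
          = ∑ t, (∑ j, u j * x (j - t)) * x (i - t) := by
            exact Finset.sum_congr rfl fun t _ => by rw [hcd]
        _ = ∑ t, ∑ j, u j * x (j - t) * x (i - t) :=
            Finset.sum_congr rfl fun t _ => Finset.sum_mul _ _ _
        _ = ∑ j, ∑ t, u j * x (j - t) * x (i - t) := Finset.sum_comm
        _ = ∑ j, u j * ∑ t, x (j - t) * x (i - t) := by
            refine Finset.sum_congr rfl fun j _ => ?_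
            rw [Finset.mul_sum]
            exact Finset.sum_congr rfl fun t _ => by ring
        _ = ∑ j, u j * (if j = i then 1 else 0) := by
            simp only [orth_shift x hx]
        _ = u i := by
            rw [Finset.sum_eq_single i]
            · simp
            · intro j _ hj; rw [if_neg hj, mul_zero]
            · intro h6; exact absurd (Finset.mem_univ _) h6
    have hD : ∀ i, u i = c 0 * x i + c e * x (i - e) := by
      intro i
      rw [hexp i]
      have hsub : ∑ t, c t * x (i - t) = ∑ t ∈ ({0, e} : Finset (ZMod L)), c t * x (i - t) := by
        refine (Finset.sum_subset (Finset.subset_univ _) ?_).symm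
        intro t _ ht
        simp only [Finset.mem_insert, Finset.mem_singleton] at ht
        push_neg at ht
        rw [hc0 t ht.1 ht.2, zero_mul]
      rw [hsub, Finset.sum_insert (by simp [Ne.symm hne]), Finset.sum_singleton, sub_zero]
    -- orthogonality condition
    have huh : ∀ i, u (i - e) = c 0 * x (i - e) + c e * x i := by
      intro i
      rw [hD (i - e)]
      congr 2
      rw [sub_sub, hee, sub_zero]
    have hE : ∑ i, u i * u (i - e) = 2 * (c 0 * c e) := by
      have hxe : ∑ i, x (i - e) * x (i - e) = 1 := by simpa using corr_shift x hx e e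
      calc ∑ i, u i * u (i - e)
          = ∑ i, ((c 0 * x i + c e * x (i - e)) * (c 0 * x (i - e) + c e * x i)) := by
            refine Finset.sum_congr rfl fun i _ => ?_
            rw [← hD i, ← huh i]
        _ = (c 0 * c 0 + c e * c e) * ∑ i, x i * x (i - e)
            + c 0 * c e * ∑ i, x i * x i
            + c 0 * c e * ∑ i, x (i - e) * x (i - e) := by
            simp only [Finset.mul_sum]
            rw [← Finset.sum_add_distrib, ← Finset.sum_add_distrib]
            exact Finset.sum_congr rfl fun i _ => by ring
        _ = 2 * (c 0 * c e) := by rw [p1, hx0, hxe]; ring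
    have hce : c 0 * c e = 0 := by
      rw [hE] at hu2; linarith
    rcases mul_eq_zero.mp hce with h7 | h7
    · refine ⟨c e, Or.inr ?_⟩
      funext i
      rw [hD i, h7, zero_mul, zero_add]
      simp
    · refine ⟨c 0, Or.inl ?_⟩
      funext i
      rw [hD i, h7, zero_mul, add_zero]
      simp
end

section
/- If (Fx₁)[k](Fρ₁)[k] = (Fx₂)[k](Fρ₂)[k] for all k and D_{Fx₁} C_{Fρ₁} D_{Fx₁}* = D_{Fx₂} C_{Fρ₂} D_{Fx₂}*, with (Fx₁) non-vanishing and (Fρ₁)[0] = (Fρ₂)[0] = 1, then the ratio r[k] = (Fx₂)[k]/(Fx₁)[k] satisfies |r[k]| = 1 for all k, r[0] = 1, and (Fρ₁)[k−p] = (Fρ₂)[k−p]·r[k]·conj(r[p]) for all k, p; in particular Fρ₁ and Fρ₂ have the same support. -/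
/-- If the first moments agree, `(Fx₁)[k](Fρ₁)[k] = (Fx₂)[k](Fρ₂)[k]`, and the
second moments agree in the Fourier domain,
`(Fx₁)[k](Fρ₁)[k-p] conj((Fx₁)[p]) = (Fx₂)[k](Fρ₂)[k-p] conj((Fx₂)[p])`, with
`Fx₁` non-vanishing and `(Fρ₁)[0] = (Fρ₂)[0] = 1`, then the ratio
`r[k] = (Fx₂)[k]/(Fx₁)[k]` has unit modulus, `r[0] = 1`,
`(Fρ₁)[k-p] = (Fρ₂)[k-p] r[k] conj(r[p])`, and `Fρ₁, Fρ₂` share support. -/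
theorem stmt_17 (L : ℕ) [NeZero L] (x₁ x₂ ρ₁ ρ₂ : ZMod L → ℝ)
    (hx₁ : ∀ k, dftR x₁ k ≠ 0)
    (hρ₁0 : dftR ρ₁ 0 = 1) (hρ₂0 : dftR ρ₂ 0 = 1)
    (hm1 : ∀ k, dftR x₁ k * dftR ρ₁ k = dftR x₂ k * dftR ρ₂ k)
    (hm2 : ∀ k p : ZMod L,
      dftR x₁ k * dftR ρ₁ (k - p) * starRingEnd ℂ (dftR x₁ p)
        = dftR x₂ k * dftR ρ₂ (k - p) * starRingEnd ℂ (dftR x₂ p)) :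
    (∀ k, ‖dftR x₂ k / dftR x₁ k‖ = 1)
    ∧ dftR x₂ 0 / dftR x₁ 0 = 1
    ∧ (∀ k p : ZMod L,
        dftR ρ₁ (k - p)
          = dftR ρ₂ (k - p) * (dftR x₂ k / dftR x₁ k)
              * starRingEnd ℂ (dftR x₂ p / dftR x₁ p))
    ∧ (∀ m : ZMod L, dftR ρ₁ m = 0 ↔ dftR ρ₂ m = 0) := by

  have habs : ∀ k, ‖dftR x₂ k‖ = ‖dftR x₁ k‖ := by
    intro k
    have h := hm2 k k
    rw [sub_self, hρ₁0, hρ₂0, mul_one, mul_one, Complex.mul_conj, Complex.mul_conj] at h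
    have h' : Complex.normSq (dftR x₁ k) = Complex.normSq (dftR x₂ k) := by
      exact_mod_cast h
    rw [Complex.normSq_eq_norm_sq, Complex.normSq_eq_norm_sq] at h'
    exact (sq_eq_sq₀ (norm_nonneg _) (norm_nonneg _)).mp h'.symm
  have hx₂ : ∀ k, dftR x₂ k ≠ 0 := by
    intro k hk
    apply hx₁ k
    have := habs k
    rw [hk, norm_zero] at this
    exact norm_eq_zero.mp this.symm
  refine ⟨?_, ?_, ?_, ?_⟩
  · intro k
    rw [norm_div, habs k, div_self (norm_ne_zero_iff.mpr (hx₁ k))]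
  · have h := hm1 0
    rw [hρ₁0, hρ₂0, mul_one, mul_one] at h
    rw [← h, div_self (hx₁ 0)]
  · intro k p
    have h := hm2 k p
    have h1 := hx₁ k
    have h2 : starRingEnd ℂ (dftR x₁ p) ≠ 0 := by
      simpa using hx₁ p
    rw [map_div₀]
    field_simp
    linear_combination h
  · intro m
    have h := hm2 m 0
    have h0 : dftR x₂ 0 = dftR x₁ 0 := by
      have h := hm1 0
      rw [hρ₁0, hρ₂0, mul_one, mul_one] at h
      exact h.symm
    rw [sub_zero] at h
    constructor
    · intro hm
      rw [hm, mul_zero, zero_mul] at h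
      rcases mul_eq_zero.mp ((mul_eq_zero.mp h.symm).resolve_right
        (by simpa using hx₂ 0)) with h' | h'
      · exact absurd h' (hx₂ m)
      · exact h'
    · intro hm
      rw [hm, mul_zero, zero_mul] at h
      rcases mul_eq_zero.mp ((mul_eq_zero.mp h).resolve_right
        (by simpa using hx₁ 0)) with h' | h'
      · exact absurd h' (hx₁ m)
      · exact h'
end
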